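/- arXiv:1508.06587 — 2 statements merged into one kernel-verified Lean document; each statement's English description precedes it below -/
import Mathlib

section
/- Let g ≥ 1 and n = 2g. There is a group isomorphism between the group of ℂ-algebra automorphisms of A_n = AddMonoidAlgebra ℂ (Fin n → ℤ) and the semidirect product (Fin n → ℂˣ) ⋊ GL(n, ℤ), where a matrix A ∈ GL(n,ℤ) acts on c : Fin n → ℂˣ by precomposing the associated character with A⁻¹, i.e., (A • c) i = ∏_j (c j) ^ ((A⁻¹) j i) (so that the character m ↦ ∏_i (c i)^(m i) is sent to m ↦ ∏_i (c i)^((A⁻¹ m) i)). -/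
open AddMonoidAlgebra Finsupp

namespace Stmt1Aux

variable {n : ℕ}

abbrev An (n : ℕ) := AddMonoidAlgebra ℂ (Fin n → ℤ)

instance (priority := 5000) {n : ℕ} : WellFoundedLT (Fin n) := inferInstance

lemma coeff_extreme (D : (Fin n → ℤ) → Lex (Fin n → ℤ))
    (hD : ∀ a b, D (a + b) = D a + D b) (hDinj : Function.Injective D)
    (u v : An n) {a₀ b₀ : Fin n → ℤ} (ha₀ : a₀ ∈ u.coeff.support) (hb₀ : b₀ ∈ v.coeff.support)
    (hau : ∀ a ∈ u.coeff.support, D a ≤ D a₀) (hbv : ∀ b ∈ v.coeff.support, D b ≤ D b₀) :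
    (u * v).coeff (a₀ + b₀) = u.coeff a₀ * v.coeff b₀ := by
  classical
  rw [AddMonoidAlgebra.coeff_mul]
  rw [Finsupp.sum]
  rw [Finset.sum_eq_single_of_mem a₀ ha₀]
  · rw [Finsupp.sum, Finset.sum_eq_single_of_mem b₀ hb₀, if_pos rfl]
    intro b hb hne
    rw [if_neg]
    intro h
    have h1 : D a₀ + D b = D a₀ + D b₀ := by rw [← hD, ← hD, h]
    exact hne (hDinj (add_left_cancel h1))
  · intro a ha hne
    rw [Finsupp.sum]
    apply Finset.sum_eq_zero
    intro b hb
    rw [if_neg]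
    intro h
    have hlt : D a < D a₀ := lt_of_le_of_ne (hau a ha) (fun he => hne (hDinj he))
    have : D a + D b < D a₀ + D b₀ := add_lt_add_of_lt_of_le hlt (hbv b hb)
    rw [← hD, ← hD, h] at this
    exact lt_irrefl _ this

lemma one_apply_ne_zero {x : Fin n → ℤ} (h : (1 : An n).coeff x ≠ 0) : x = 0 := by
  classical
  rw [AddMonoidAlgebra.one_def, AddMonoidAlgebra.coeff_single, Finsupp.single_apply] at h
  by_contra hx
  rw [if_neg (Ne.symm hx)] at h
  exact h rfl

lemma units_eq_single (u : (An n)ˣ) :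
    ∃ (a : Fin n → ℤ) (c : ℂˣ), (u : An n) = AddMonoidAlgebra.single a (c : ℂ) := by
  classical
  set v : An n := ((u⁻¹ : (An n)ˣ) : An n) with hv_def
  have huv : (u : An n) * v = 1 := u.mul_inv
  have hu : (u : An n) ≠ 0 := by
    intro h; rw [h, zero_mul] at huv; exact zero_ne_one huv
  have hv : v ≠ 0 := by
    intro h; rw [h, mul_zero] at huv; exact zero_ne_one huv
  -- extremes
  have hus : u.val.coeff.support.Nonempty :=
    Finsupp.support_nonempty_iff.2 (mt (fun h => AddMonoidAlgebra.coeff_injective (h.trans rfl)) hu)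
  have hvs : v.coeff.support.Nonempty :=
    Finsupp.support_nonempty_iff.2 (mt (fun h => AddMonoidAlgebra.coeff_injective (h.trans rfl)) hv)
  obtain ⟨a₀, ha₀, hamax⟩ := Finset.exists_max_image u.val.coeff.support (fun a => toLex a) hus
  obtain ⟨b₀, hb₀, hbmax⟩ := Finset.exists_max_image v.coeff.support (fun a => toLex a) hvs
  obtain ⟨a₁, ha₁, hamin⟩ := Finset.exists_max_image u.val.coeff.support (fun a => toLex (-a)) hus
  obtain ⟨b₁, hb₁, hbmin⟩ := Finset.exists_max_image v.coeff.support (fun a => toLex (-a)) hvs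
  have hDneg : ∀ a b : Fin n → ℤ, toLex (-(a + b)) = toLex (-a) + toLex (-b) := by
    intro a b; rw [neg_add]; rfl
  have hDneginj : Function.Injective (fun a : Fin n → ℤ => toLex (-a)) :=
    fun a b h => by simpa using neg_injective (toLex.injective h)
  have h0 : a₀ + b₀ = 0 := by
    apply one_apply_ne_zero
    rw [← huv, coeff_extreme toLex (fun _ _ => rfl) toLex.injective u.val v ha₀ hb₀ hamax hbmax]
    exact mul_ne_zero (Finsupp.mem_support_iff.1 ha₀) (Finsupp.mem_support_iff.1 hb₀)
  have h1 : a₁ + b₁ = 0 := by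
    apply one_apply_ne_zero
    rw [← huv, coeff_extreme (fun a => toLex (-a)) hDneg hDneginj u.val v ha₁ hb₁ hamin hbmin]
    exact mul_ne_zero (Finsupp.mem_support_iff.1 ha₁) (Finsupp.mem_support_iff.1 hb₁)
  -- a₀ = a₁
  have key : a₀ = a₁ := by
    have h2 : toLex a₁ ≤ toLex a₀ := hamax a₁ ha₁
    have h3 : toLex b₁ ≤ toLex b₀ := hbmax b₁ hb₁
    have h4 : toLex a₀ + toLex b₀ = 0 := by
      have := congrArg toLex h0; exact this
    have h5 : toLex a₁ + toLex b₁ = 0 := by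
      have := congrArg toLex h1; exact this
    have h6 : toLex a₀ ≤ toLex a₁ := by
      have : toLex a₀ = -toLex b₀ := eq_neg_of_add_eq_zero_left h4
      have h7 : toLex a₁ = -toLex b₁ := eq_neg_of_add_eq_zero_left h5
      rw [this, h7]
      exact neg_le_neg h3
    exact toLex.injective (le_antisymm h6 h2)
  have hsub : u.val.coeff.support ⊆ {a₀} := by
    intro a ha
    rw [Finset.mem_singleton]
    have hle : toLex a ≤ toLex a₀ := hamax a ha
    have hge : toLex (-a) ≤ toLex (-a₁) := hamin a ha
    have hge' : toLex a₀ ≤ toLex a := by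
      rw [← key] at hge
      have : -toLex a ≤ -toLex a₀ := hge
      exact neg_le_neg_iff.1 this
    exact toLex.injective (le_antisymm hle hge')
  have := Finsupp.support_subset_singleton.1 hsub
  refine ⟨a₀, Units.mk0 (u.val.coeff a₀) ?_, ?_⟩
  · intro h
    rw [h, Finsupp.single_zero] at this
    exact hu (AddMonoidAlgebra.coeff_injective this)
  · exact AddMonoidAlgebra.coeff_injective this

lemma zpow_finset_sum {G : Type*} [CommGroup G] {ι : Type*} (a : G) (s : Finset ι) (f : ι → ℤ) :
    a ^ (∑ i ∈ s, f i) = ∏ i ∈ s, a ^ f i := by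
  induction s using Finset.cons_induction with
  | empty => simp
  | cons i s hi ih => rw [Finset.sum_cons, Finset.prod_cons, zpow_add, ih]

/-- The character of the torus attached to `c`. -/
noncomputable def chi (c : Fin n → ℂˣ) (m : Fin n → ℤ) : ℂˣ := ∏ i, c i ^ m i

lemma chi_zero (c : Fin n → ℂˣ) : chi c 0 = 1 := by simp [chi]

lemma chi_add (c : Fin n → ℂˣ) (m m' : Fin n → ℤ) :
    chi c (m + m') = chi c m * chi c m' := by
  simp [chi, zpow_add, Finset.prod_mul_distrib]

lemma chi_one (m : Fin n → ℤ) : chi 1 m = 1 := by simp [chi]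

lemma chi_mul_left (c c' : Fin n → ℂˣ) (m : Fin n → ℤ) :
    chi (c * c') m = chi c m * chi c' m := by
  simp [chi, mul_zpow, Finset.prod_mul_distrib]

lemma chi_single (c : Fin n → ℂˣ) (i : Fin n) : chi c (Pi.single i 1) = c i := by
  rw [chi, Finset.prod_eq_single i]
  · rw [Pi.single_eq_same, zpow_one]
  · intro j _ hj
    rw [Pi.single_eq_of_ne hj, zpow_zero]
  · intro h
    exact absurd (Finset.mem_univ i) h

lemma chi_mix (c : Fin n → ℂˣ) (N : Matrix (Fin n) (Fin n) ℤ) (v : Fin n → ℤ) :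
    chi (fun j => ∏ k, c k ^ N k j) v = chi c (N.mulVec v) := by
  unfold chi
  have h1 : ∀ j, (∏ k, c k ^ N k j) ^ v j = ∏ k, c k ^ (N k j * v j) := by
    intro j
    rw [← Finset.prod_zpow]
    exact Finset.prod_congr rfl fun k _ => (zpow_mul (c k) (N k j) (v j)).symm
  simp_rw [h1]
  rw [Finset.prod_comm]
  refine Finset.prod_congr rfl fun k _ => ?_
  rw [Matrix.mulVec, dotProduct, zpow_finset_sum]

/-- The invertible monomial `c · X^a`. -/
noncomputable def mUnit (c : ℂˣ) (a : Fin n → ℤ) : (An n)ˣ where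
  val := AddMonoidAlgebra.single a (c : ℂ)
  inv := AddMonoidAlgebra.single (-a) ((c⁻¹ : ℂˣ) : ℂ)
  val_inv := by
    rw [AddMonoidAlgebra.single_mul_single, AddMonoidAlgebra.one_def]
    simp
  inv_val := by
    rw [AddMonoidAlgebra.single_mul_single, AddMonoidAlgebra.one_def]
    simp

@[simp] lemma mUnit_val (c : ℂˣ) (a : Fin n → ℤ) :
    (mUnit c a : An n) = AddMonoidAlgebra.single a (c : ℂ) := rfl

/-- The basic monoid hom `m ↦ χ_c(M m) X^{M m}` into the units. -/
noncomputable def mhom (c : Fin n → ℂˣ) (M : Matrix (Fin n) (Fin n) ℤ) :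
    Multiplicative (Fin n → ℤ) →* (An n)ˣ where
  toFun m := mUnit (chi c (M.mulVec m.toAdd)) (M.mulVec m.toAdd)
  map_one' := by
    apply Units.ext
    simp [Matrix.mulVec_zero, chi_zero, AddMonoidAlgebra.one_def]
  map_mul' m m' := by
    apply Units.ext
    have : (m * m').toAdd = m.toAdd + m'.toAdd := rfl
    simp only [mUnit_val, Units.val_mul, AddMonoidAlgebra.single_mul_single, this,
      Matrix.mulVec_add, chi_add, Units.val_mul]

/-- The monoid hom `m ↦ χ_d(m) X^{M m}` into the units. -/
noncomputable def mhom2 (d : Fin n → ℂˣ) (M : Matrix (Fin n) (Fin n) ℤ) :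
    Multiplicative (Fin n → ℤ) →* (An n)ˣ where
  toFun m := mUnit (chi d m.toAdd) (M.mulVec m.toAdd)
  map_one' := by
    apply Units.ext
    simp [Matrix.mulVec_zero, chi_zero, AddMonoidAlgebra.one_def]
  map_mul' m m' := by
    apply Units.ext
    have : (m * m').toAdd = m.toAdd + m'.toAdd := rfl
    simp only [mUnit_val, Units.val_mul, AddMonoidAlgebra.single_mul_single, this,
      Matrix.mulVec_add, chi_add, Units.val_mul]

/-- The algebra endomorphism sending `X^a` to `χ_c(M a) X^{M a}`. -/
noncomputable def T (c : Fin n → ℂˣ) (M : Matrix (Fin n) (Fin n) ℤ) : An n →ₐ[ℂ] An n :=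
  AddMonoidAlgebra.lift ℂ (An n) (Fin n → ℤ) ((Units.coeHom (An n)).comp (mhom c M))

lemma T_single (c : Fin n → ℂˣ) (M : Matrix (Fin n) (Fin n) ℤ) (a : Fin n → ℤ) (r : ℂ) :
    T c M (AddMonoidAlgebra.single a r)
      = AddMonoidAlgebra.single (M.mulVec a) (r * (chi c (M.mulVec a) : ℂ)) := by
  rw [T, AddMonoidAlgebra.lift_single]
  have : ((Units.coeHom (An n)).comp (mhom c M)) (Multiplicative.ofAdd a)
      = AddMonoidAlgebra.single (M.mulVec a) ((chi c (M.mulVec a) : ℂ)) := rfl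
  rw [this, AddMonoidAlgebra.smul_single]
  rw [smul_eq_mul]

lemma monoidHom_ext {M : Type*} [CommGroup M] (f g : Multiplicative (Fin n → ℤ) →* M)
    (h : ∀ i, f (Multiplicative.ofAdd (Pi.single i 1)) = g (Multiplicative.ofAdd (Pi.single i 1))) :
    f = g := by
  classical
  let e : (Fin n → Multiplicative ℤ) ≃* Multiplicative (Fin n → ℤ) :=
    (MulEquiv.funMultiplicative (Fin n) ℤ).symm
  have key : f.comp e.toMonoidHom = g.comp e.toMonoidHom := by
    apply MonoidHom.functions_ext
    intro i x
    have hx : ∀ (F : Multiplicative (Fin n → ℤ) →* M),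
        F (e (Pi.mulSingle i x)) = (F (Multiplicative.ofAdd (Pi.single i 1))) ^ x.toAdd := by
      intro F
      have h1 : e (Pi.mulSingle i x) = Multiplicative.ofAdd (Pi.single i x.toAdd) := by
        rfl
      have h2 : (Pi.single i x.toAdd : Fin n → ℤ) = x.toAdd • Pi.single i (1 : ℤ) := by
        rw [← Pi.single_smul, smul_eq_mul, mul_one]
      have h3 : Multiplicative.ofAdd (x.toAdd • (Pi.single i 1 : Fin n → ℤ))
          = (Multiplicative.ofAdd ((Pi.single i 1 : Fin n → ℤ))) ^ x.toAdd :=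
        ofAdd_zsmul x.toAdd (Pi.single i 1 : Fin n → ℤ)
      rw [h1, h2, h3, MonoidHom.map_zpow]
    simp only [MonoidHom.comp_apply, MulEquiv.coe_toMonoidHom]
    rw [hx f, hx g, h i]
  refine MonoidHom.ext fun m => ?_
  have : m = e (e.symm m) := (e.apply_symm_apply m).symm
  rw [this]
  exact DFunLike.congr_fun key (e.symm m)

lemma mat_eq_one (N : Matrix (Fin n) (Fin n) ℤ)
    (h : ∀ i, N.mulVec (Pi.single i 1) = Pi.single i 1) : N = 1 := by
  classical
  ext j i
  have := congrFun (h i) j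
  rw [Matrix.mulVec_single] at this
  simp only [Pi.smul_apply, Matrix.col_apply, op_smul_eq_mul, mul_one] at this
  rw [this, Pi.single_apply, Matrix.one_apply]

end Stmt1Aux

open Stmt1Aux in
/-- The group of `ℂ`-algebra automorphisms of the Laurent polynomial algebra
`A_n = AddMonoidAlgebra ℂ (Fin n → ℤ)` (the coordinate ring of `(ℂˣ)ⁿ`, `n = 2g`)
is isomorphic to the semidirect product `(Fin n → ℂˣ) ⋊ GL(n, ℤ)`, where
`A ∈ GL(n, ℤ)` acts on `c : Fin n → ℂˣ` by `(A • c) i = ∏ j, (c j) ^ ((A⁻¹) j i)`. -/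
theorem stmt_1 (g : ℕ) (hg : 1 ≤ g) (n : ℕ) (hn : n = 2 * g)
    (φ : GL (Fin n) ℤ →* MulAut (Fin n → ℂˣ))
    (hφ : ∀ (A : GL (Fin n) ℤ) (c : Fin n → ℂˣ) (i : Fin n),
      φ A c i = ∏ j, (c j) ^ (((A⁻¹ : GL (Fin n) ℤ) : Matrix (Fin n) (Fin n) ℤ) j i)) :
    Nonempty
      ((AddMonoidAlgebra ℂ (Fin n → ℤ) ≃ₐ[ℂ] AddMonoidAlgebra ℂ (Fin n → ℤ)) ≃*
        ((Fin n → ℂˣ) ⋊[φ] GL (Fin n) ℤ)) := by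
  classical
  -- χ identity for the action φ
  have chi_phi : ∀ (A : GL (Fin n) ℤ) (c' : Fin n → ℂˣ) (v : Fin n → ℤ),
      chi (φ A c') v
        = chi c' (((A⁻¹ : GL (Fin n) ℤ) : Matrix (Fin n) (Fin n) ℤ).mulVec v) := by
    intro A c' v
    have h1 : φ A c'
        = fun i => ∏ j, c' j ^ (((A⁻¹ : GL (Fin n) ℤ) : Matrix (Fin n) (Fin n) ℤ) j i) :=
      funext fun i => hφ A c' i
    rw [h1, chi_mix]
  -- the homomorphism into the endomorphism monoid
  let Ψ : ((Fin n → ℂˣ) ⋊[φ] GL (Fin n) ℤ) →* (An n →ₐ[ℂ] An n) :=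
  { toFun := fun p => T p.left (p.right : Matrix (Fin n) (Fin n) ℤ)
    map_one' := by
      refine AddMonoidAlgebra.algHom_ext ?_ (Subsingleton.elim _ _)
      intro a
      show T (1 : Fin n → ℂˣ) ((1 : GL (Fin n) ℤ) : Matrix (Fin n) (Fin n) ℤ)
          (AddMonoidAlgebra.single a 1) = AddMonoidAlgebra.single a 1
      rw [show ((1 : GL (Fin n) ℤ) : Matrix (Fin n) (Fin n) ℤ) = 1 from rfl, T_single,
        Matrix.one_mulVec, chi_one]
      simp
    map_mul' := by
      intro p q
      refine AddMonoidAlgebra.algHom_ext ?_ (Subsingleton.elim _ _)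
      intro a
      show T (p.left * φ p.right q.left)
            ((p.right * q.right : GL (Fin n) ℤ) : Matrix (Fin n) (Fin n) ℤ)
            (AddMonoidAlgebra.single a 1)
          = T p.left (p.right : Matrix (Fin n) (Fin n) ℤ)
              (T q.left (q.right : Matrix (Fin n) (Fin n) ℤ) (AddMonoidAlgebra.single a 1))
      rw [show ((p.right * q.right : GL (Fin n) ℤ) : Matrix (Fin n) (Fin n) ℤ)
          = (p.right : Matrix (Fin n) (Fin n) ℤ) * (q.right : Matrix (Fin n) (Fin n) ℤ) from rfl]
      rw [T_single, T_single, T_single, Matrix.mulVec_mulVec]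
      congr 1
      rw [chi_mul_left, chi_phi]
      have h2 : ((p.right⁻¹ : GL (Fin n) ℤ) : Matrix (Fin n) (Fin n) ℤ).mulVec
            (((p.right : Matrix (Fin n) (Fin n) ℤ)
              * (q.right : Matrix (Fin n) (Fin n) ℤ)).mulVec a)
          = (q.right : Matrix (Fin n) (Fin n) ℤ).mulVec a := by
        rw [Matrix.mulVec_mulVec, ← mul_assoc,
          show ((p.right⁻¹ : GL (Fin n) ℤ) : Matrix (Fin n) (Fin n) ℤ)
              * (p.right : Matrix (Fin n) (Fin n) ℤ) = 1 from p.right.inv_mul, one_mul]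
      rw [h2, Units.val_mul]
      ring }
  -- the homomorphism into the automorphism group
  let Φ : ((Fin n → ℂˣ) ⋊[φ] GL (Fin n) ℤ) →* (An n ≃ₐ[ℂ] An n) :=
    (AlgEquiv.algHomUnitsEquiv ℂ (An n)).toMonoidHom.comp Ψ.toHomUnits
  have hΦ_apply : ∀ p x, Φ p x = Ψ p x := fun p x => rfl
  -- injectivity
  have hinj : Function.Injective Φ := by
    rw [injective_iff_map_eq_one]
    rintro ⟨c, A⟩ hp
    have hΨ : Ψ ⟨c, A⟩ = 1 := by
      have := congrArg (fun (e : An n ≃ₐ[ℂ] An n) (x : An n) => e x) hp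
      refine AddMonoidAlgebra.algHom_ext ?_ (Subsingleton.elim _ _)
      intro a
      have h1 := congrFun this (AddMonoidAlgebra.single a 1)
      exact h1
    have key : ∀ i : Fin n,
        (A : Matrix (Fin n) (Fin n) ℤ).mulVec (Pi.single i 1) = Pi.single i 1 ∧
        (chi c ((A : Matrix (Fin n) (Fin n) ℤ).mulVec (Pi.single i 1)) : ℂ) = 1 := by
      intro i
      have h1 := DFunLike.congr_fun hΨ (AddMonoidAlgebra.single (Pi.single i 1) 1)
      rw [show (Ψ ⟨c, A⟩) (AddMonoidAlgebra.single (Pi.single i 1) 1)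
          = T c (A : Matrix (Fin n) (Fin n) ℤ) (AddMonoidAlgebra.single (Pi.single i 1) 1) from rfl,
        T_single, one_mul] at h1
      have h2 : (1 : An n →ₐ[ℂ] An n) (AddMonoidAlgebra.single (Pi.single i 1) 1)
          = AddMonoidAlgebra.single (Pi.single i 1) (1 : ℂ) := rfl
      rw [h2] at h1
      rcases AddMonoidAlgebra.single_inj.1 h1 with ⟨he, hc⟩ | ⟨hc, _⟩
      · exact ⟨he, by rw [he] at hc ⊢; exact hc⟩
      · exact absurd hc (Units.ne_zero _)
    have hA : (A : Matrix (Fin n) (Fin n) ℤ) = 1 := mat_eq_one _ fun i => (key i).1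
    have hA1 : A = 1 := Units.ext hA
    have hc : c = 1 := by
      funext i
      have := (key i).2
      rw [hA, Matrix.one_mulVec, chi_single] at this
      exact Units.ext this
    rw [hc, hA1]
    rfl
  -- surjectivity
  have hsurj : Function.Surjective Φ := by
    intro σ
    -- units images of the coordinates
    have hU : ∀ i : Fin n, ∃ (a : Fin n → ℤ) (cu : ℂˣ),
        σ (AddMonoidAlgebra.single (Pi.single i 1) (1 : ℂ)) = AddMonoidAlgebra.single a (cu : ℂ) := by
      intro i
      have := units_eq_single
        (Units.map (σ : An n →ₐ[ℂ] An n).toRingHom.toMonoidHom (mUnit 1 (Pi.single i 1)))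
      simpa using this
    choose m d hmd using hU
    -- same for the inverse
    have hU' : ∀ i : Fin n, ∃ (a : Fin n → ℤ) (cu : ℂˣ),
        σ.symm (AddMonoidAlgebra.single (Pi.single i 1) (1 : ℂ)) = AddMonoidAlgebra.single a (cu : ℂ) := by
      intro i
      have := units_eq_single
        (Units.map (σ.symm : An n →ₐ[ℂ] An n).toRingHom.toMonoidHom (mUnit 1 (Pi.single i 1)))
      simpa using this
    choose m' d' hmd' using hU'
    set M : Matrix (Fin n) (Fin n) ℤ := Matrix.of fun j i => m i j with hM
    set M' : Matrix (Fin n) (Fin n) ℤ := Matrix.of fun j i => m' i j with hM'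
    have hMe : ∀ i, M.mulVec (Pi.single i 1) = m i := by
      intro i; rw [Matrix.mulVec_single]; funext j; simp [hM]
    have hMe' : ∀ i, M'.mulVec (Pi.single i 1) = m' i := by
      intro i; rw [Matrix.mulVec_single]; funext j; simp [hM']
    -- monomial image description
    have hmono : ∀ (τ : An n ≃ₐ[ℂ] An n) (N : Matrix (Fin n) (Fin n) ℤ) (e : Fin n → ℂˣ),
        (∀ i, τ (AddMonoidAlgebra.single (Pi.single i 1) (1 : ℂ))
            = AddMonoidAlgebra.single (N.mulVec (Pi.single i 1)) ((e i : ℂ))) →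
        ∀ a, τ (AddMonoidAlgebra.single a (1 : ℂ)) = AddMonoidAlgebra.single (N.mulVec a) ((chi e a : ℂ)) := by
      intro τ N e he a
      have hF := monoidHom_ext
        ((Units.map (τ : An n →ₐ[ℂ] An n).toRingHom.toMonoidHom).comp
          (mhom2 1 (1 : Matrix (Fin n) (Fin n) ℤ)))
        (mhom2 e N) ?_
      · have := congrArg Units.val (DFunLike.congr_fun hF (Multiplicative.ofAdd a))
        simpa [mhom2, Matrix.one_mulVec, chi_one] using this
      · intro i
        apply Units.ext
        have lhs : (((Units.map (τ : An n →ₐ[ℂ] An n).toRingHom.toMonoidHom).comp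
              (mhom2 1 (1 : Matrix (Fin n) (Fin n) ℤ)))
              (Multiplicative.ofAdd (Pi.single i 1)) : An n)
            = τ (AddMonoidAlgebra.single (Pi.single i 1) (1 : ℂ)) := by
          simp [mhom2, Matrix.one_mulVec, chi_one]
        rw [lhs, he i]
        simp [mhom2, chi_single]
    have S1 : ∀ a, σ (AddMonoidAlgebra.single a (1:ℂ)) = AddMonoidAlgebra.single (M.mulVec a) ((chi d a : ℂ)) :=
      hmono σ M d fun i => by rw [hMe i]; exact hmd i
    have S2 : ∀ a, σ.symm (AddMonoidAlgebra.single a (1:ℂ))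
        = AddMonoidAlgebra.single (M'.mulVec a) ((chi d' a : ℂ)) :=
      hmono σ.symm M' d' fun i => by rw [hMe' i]; exact hmd' i
    -- σ applied to a general monomial
    have S1' : ∀ a (r : ℂ), σ (AddMonoidAlgebra.single a r)
        = AddMonoidAlgebra.single (M.mulVec a) (r * (chi d a : ℂ)) := by
      intro a r
      have : AddMonoidAlgebra.single a r = r • AddMonoidAlgebra.single a (1:ℂ) := by
        rw [AddMonoidAlgebra.smul_single, smul_eq_mul, mul_one]
      rw [this, map_smul, S1, AddMonoidAlgebra.smul_single, smul_eq_mul]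
    have S2' : ∀ a (r : ℂ), σ.symm (AddMonoidAlgebra.single a r)
        = AddMonoidAlgebra.single (M'.mulVec a) (r * (chi d' a : ℂ)) := by
      intro a r
      have : AddMonoidAlgebra.single a r = r • AddMonoidAlgebra.single a (1:ℂ) := by
        rw [AddMonoidAlgebra.smul_single, smul_eq_mul, mul_one]
      rw [this, map_smul, S2, AddMonoidAlgebra.smul_single, smul_eq_mul]
    -- the matrices are inverse to each other
    have comp1 : ∀ i : Fin n, (M * M').mulVec (Pi.single i 1) = Pi.single i 1 := by
      intro i
      have h1 : σ (σ.symm (AddMonoidAlgebra.single (Pi.single i 1) (1:ℂ)))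
          = AddMonoidAlgebra.single (Pi.single i 1) (1:ℂ) := σ.apply_symm_apply _
      rw [S2, S1'] at h1
      rcases AddMonoidAlgebra.single_inj.1 h1 with ⟨he, _⟩ | ⟨hc, _⟩
      · rw [← Matrix.mulVec_mulVec]; exact he
      · exfalso
        rw [← Units.val_mul] at hc
        exact Units.ne_zero _ hc
    have comp2 : ∀ i : Fin n, (M' * M).mulVec (Pi.single i 1) = Pi.single i 1 := by
      intro i
      have h1 : σ.symm (σ (AddMonoidAlgebra.single (Pi.single i 1) (1:ℂ)))
          = AddMonoidAlgebra.single (Pi.single i 1) (1:ℂ) := σ.symm_apply_apply _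
      rw [S1, S2'] at h1
      rcases AddMonoidAlgebra.single_inj.1 h1 with ⟨he, _⟩ | ⟨hc, _⟩
      · rw [← Matrix.mulVec_mulVec]; exact he
      · exfalso
        rw [← Units.val_mul] at hc
        exact Units.ne_zero _ hc
    have hMM' : M * M' = 1 := mat_eq_one _ comp1
    have hM'M : M' * M = 1 := mat_eq_one _ comp2
    refine ⟨⟨fun j => ∏ k, d k ^ (M' k j), ⟨M, M', hMM', hM'M⟩⟩, ?_⟩
    have hAH : T (fun j => ∏ k, d k ^ (M' k j)) M = (σ : An n →ₐ[ℂ] An n) := by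
      refine AddMonoidAlgebra.algHom_ext ?_ (Subsingleton.elim _ _)
      intro a
      rw [T_single, one_mul]
      have hc : chi (fun j => ∏ k, d k ^ (M' k j)) (M.mulVec a) = chi d a := by
        rw [chi_mix, Matrix.mulVec_mulVec, hM'M, Matrix.one_mulVec]
      rw [hc]
      exact (S1 a).symm
    apply AlgEquiv.ext
    intro x
    exact DFunLike.congr_fun hAH x
  exact ⟨(MulEquiv.ofBijective Φ ⟨hinj, hsurj⟩).symm⟩
end

section
/- Let n ≥ 1. For every ℂ-algebra automorphism φ of A_n = AddMonoidAlgebra ℂ (Fin n → ℤ) there exist a unique additive group automorphism σ of (Fin n → ℤ) and a unique group homomorphism χ : Multiplicative (Fin n → ℤ) →* ℂˣ such that φ (Finsupp.single m 1) = (χ m : ℂ) • Finsupp.single (σ m) 1 for every m : Fin n → ℤ. Moreover the assignment φ ↦ σ is a group homomorphism from the group of ℂ-algebra automorphisms of A_n to the group of additive automorphisms of (Fin n → ℤ). -/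
open Finsupp

theorem trivUnit {G : Type*} [AddCommGroup G] [LinearOrder G] [IsOrderedAddMonoid G] {f g : AddMonoidAlgebra ℂ G}
    (h : f * g = 1) : ∃ (a : G) (c : ℂˣ), f = AddMonoidAlgebra.single a (c : ℂ) := by
  classical
  have hf : f ≠ 0 := by rintro rfl; simp at h
  have hg : g ≠ 0 := by rintro rfl; simp at h
  have hfs : f.coeff.support.Nonempty := Finsupp.support_nonempty_iff.2 (by simpa using hf)
  have hgs : g.coeff.support.Nonempty := Finsupp.support_nonempty_iff.2 (by simpa using hg)
  set Mf := f.coeff.support.max' hfs with hMf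
  set Mg := g.coeff.support.max' hgs with hMg
  set mf := f.coeff.support.min' hfs with hmf
  set mg := g.coeff.support.min' hgs with hmg
  have keymax : (f * g).coeff (Mf + Mg) = f.coeff Mf * g.coeff Mg := by
    rw [AddMonoidAlgebra.coeff_mul, Finsupp.sum]
    rw [Finset.sum_eq_single Mf]
    · rw [Finsupp.sum, Finset.sum_eq_single Mg]
      · rw [if_pos rfl]
      · intro b hb hne
        exact if_neg fun he => hne (add_left_cancel he)
      · intro hnm; simp [Finsupp.notMem_support_iff.mp hnm]
    · intro a ha hne
      rw [Finsupp.sum]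
      refine Finset.sum_eq_zero fun b hb => if_neg fun he => ?_
      have ha' : a < Mf := (Finset.le_max' _ _ ha).lt_of_ne hne
      have hb' : b ≤ Mg := Finset.le_max' _ _ hb
      exact (add_lt_add_of_lt_of_le ha' hb').ne he
    · intro hnm; exact absurd (Finset.max'_mem _ _) hnm
  have keymin : (f * g).coeff (mf + mg) = f.coeff mf * g.coeff mg := by
    rw [AddMonoidAlgebra.coeff_mul, Finsupp.sum]
    rw [Finset.sum_eq_single mf]
    · rw [Finsupp.sum, Finset.sum_eq_single mg]
      · rw [if_pos rfl]
      · intro b hb hne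
        exact if_neg fun he => hne (add_left_cancel he)
      · intro hnm; simp [Finsupp.notMem_support_iff.mp hnm]
    · intro a ha hne
      rw [Finsupp.sum]
      refine Finset.sum_eq_zero fun b hb => if_neg fun he => ?_
      have ha' : mf < a := (Finset.min'_le _ _ ha).lt_of_ne' hne
      have hb' : mg ≤ b := Finset.min'_le _ _ hb
      exact ((add_lt_add_of_lt_of_le ha' hb').ne he.symm).elim
    · intro hnm; exact absurd (Finset.min'_mem _ _) hnm
  have hfM : f.coeff Mf ≠ 0 := Finsupp.mem_support_iff.mp (Finset.max'_mem _ _)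
  have hgM : g.coeff Mg ≠ 0 := Finsupp.mem_support_iff.mp (Finset.max'_mem _ _)
  have hfm : f.coeff mf ≠ 0 := Finsupp.mem_support_iff.mp (Finset.min'_mem _ _)
  have hgm : g.coeff mg ≠ 0 := Finsupp.mem_support_iff.mp (Finset.min'_mem _ _)
  have hsupp : (f * g).coeff.support = {0} := by
    rw [h, AddMonoidAlgebra.one_def, AddMonoidAlgebra.coeff_single, Finsupp.support_single_ne_zero _ one_ne_zero]
  have hM0 : Mf + Mg = 0 := by
    have : Mf + Mg ∈ (f * g).coeff.support := Finsupp.mem_support_iff.mpr (by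
      rw [keymax]; exact mul_ne_zero hfM hgM)
    simpa [hsupp] using this
  have hm0 : mf + mg = 0 := by
    have : mf + mg ∈ (f * g).coeff.support := Finsupp.mem_support_iff.mpr (by
      rw [keymin]; exact mul_ne_zero hfm hgm)
    simpa [hsupp] using this
  have hle1 : mf ≤ Mf := Finset.min'_le _ _ (Finset.max'_mem _ _)
  have hle2 : mg ≤ Mg := Finset.min'_le _ _ (Finset.max'_mem _ _)
  have heq : Mf = mf := by
    have h1 : Mf + mg ≤ mf + mg := by
      calc Mf + mg ≤ Mf + Mg := add_le_add_right hle2 _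
      _ = 0 := hM0
      _ = mf + mg := hm0.symm
    exact le_antisymm (le_of_add_le_add_right h1) hle1
  have hsub : f.coeff.support ⊆ {Mf} := by
    intro a ha
    have h1 : a ≤ Mf := Finset.le_max' _ _ ha
    have h2 : mf ≤ a := Finset.min'_le _ _ ha
    rw [Finset.mem_singleton]
    exact le_antisymm h1 (heq ▸ h2)
  exact ⟨Mf, Units.mk0 (f.coeff Mf) hfM, AddMonoidAlgebra.ext (by rw [AddMonoidAlgebra.coeff_single]; exact Finsupp.support_subset_singleton.mp hsub)⟩

theorem trivUnit' {n : ℕ} {f g : AddMonoidAlgebra ℂ (Fin n → ℤ)}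
    (h : f * g = 1) : ∃ (a : Fin n → ℤ) (c : ℂˣ), f = AddMonoidAlgebra.single a (c : ℂ) := by
  exact @trivUnit (Lex (Fin n → ℤ)) _ _ _ f g h

theorem monoImage {n : ℕ}
    (φ : AddMonoidAlgebra ℂ (Fin n → ℤ) ≃ₐ[ℂ] AddMonoidAlgebra ℂ (Fin n → ℤ))
    (m : Fin n → ℤ) : ∃ (a : Fin n → ℤ) (c : ℂˣ),
      φ (AddMonoidAlgebra.single m 1) = AddMonoidAlgebra.single a (c : ℂ) := by
  apply trivUnit' (g := φ (AddMonoidAlgebra.single (-m) 1))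
  rw [← map_mul, AddMonoidAlgebra.single_mul_single, add_neg_cancel, one_mul,
    ← AddMonoidAlgebra.one_def, map_one]

/-- Every `ℂ`-algebra automorphism `φ` of `A_n = AddMonoidAlgebra ℂ (Fin n → ℤ)` sends each
monomial `Xᵐ` to `(χ m) • X^{σ m}` for a unique additive automorphism `σ` of `ℤⁿ` and a unique
character `χ : ℤⁿ → ℂˣ`; moreover `φ ↦ σ` is a group homomorphism. -/
theorem stmt_4 (n : ℕ) (hn : 1 ≤ n) :
    (∀ φ : AddMonoidAlgebra ℂ (Fin n → ℤ) ≃ₐ[ℂ] AddMonoidAlgebra ℂ (Fin n → ℤ),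
      ∃! p : AddAut (Fin n → ℤ) × (Multiplicative (Fin n → ℤ) →* ℂˣ),
        ∀ m : Fin n → ℤ,
          φ (AddMonoidAlgebra.single m 1 : AddMonoidAlgebra ℂ (Fin n → ℤ)) =
            ((p.2 (Multiplicative.ofAdd m) : ℂ)) •
              (AddMonoidAlgebra.single (p.1 m) 1 : AddMonoidAlgebra ℂ (Fin n → ℤ))) ∧
    ∃ f : (AddMonoidAlgebra ℂ (Fin n → ℤ) ≃ₐ[ℂ] AddMonoidAlgebra ℂ (Fin n → ℤ)) →*
        Multiplicative (AddAut (Fin n → ℤ)),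
      ∀ (φ : AddMonoidAlgebra ℂ (Fin n → ℤ) ≃ₐ[ℂ] AddMonoidAlgebra ℂ (Fin n → ℤ))
        (m : Fin n → ℤ), ∃ c : ℂˣ,
          φ (AddMonoidAlgebra.single m 1 : AddMonoidAlgebra ℂ (Fin n → ℤ)) =
            (c : ℂ) • (AddMonoidAlgebra.single (Multiplicative.toAdd (f φ) m) 1 : AddMonoidAlgebra ℂ (Fin n → ℤ)) := by
  classical
  have H := fun (φ : AddMonoidAlgebra ℂ (Fin n → ℤ) ≃ₐ[ℂ] AddMonoidAlgebra ℂ (Fin n → ℤ))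
    (m : Fin n → ℤ) => monoImage φ m
  choose s c hsc using H
  have huniq : ∀ {a a' : Fin n → ℤ} {x x' : ℂ}, x ≠ 0 →
      (AddMonoidAlgebra.single a x : AddMonoidAlgebra ℂ (Fin n → ℤ)) = AddMonoidAlgebra.single a' x' →
      a = a' ∧ x = x' := by
    intro a a' x x' hx h
    rcases AddMonoidAlgebra.single_inj.mp h with ⟨h1, h2⟩ | ⟨h1, h2⟩
    · exact ⟨h1, h2⟩
    · exact absurd h1 hx
  have hadd : ∀ φ m m', s φ (m + m') = s φ m + s φ m' ∧
      (c φ (m + m') : ℂ) = (c φ m : ℂ) * (c φ m' : ℂ) := by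
    intro φ m m'
    have h1 : (AddMonoidAlgebra.single (s φ (m + m')) ((c φ (m + m') : ℂ)) :
        AddMonoidAlgebra ℂ (Fin n → ℤ)) =
        AddMonoidAlgebra.single (s φ m + s φ m') ((c φ m : ℂ) * (c φ m' : ℂ)) := by
      calc (AddMonoidAlgebra.single (s φ (m + m')) ((c φ (m + m') : ℂ)) :
            AddMonoidAlgebra ℂ (Fin n → ℤ))
          = φ (AddMonoidAlgebra.single (m + m') 1) := (hsc φ (m + m')).symm
        _ = φ (AddMonoidAlgebra.single m 1 * AddMonoidAlgebra.single m' 1) := by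
            rw [AddMonoidAlgebra.single_mul_single, one_mul]
        _ = φ (AddMonoidAlgebra.single m 1) * φ (AddMonoidAlgebra.single m' 1) := map_mul φ _ _
        _ = AddMonoidAlgebra.single (s φ m) ((c φ m : ℂ)) *
              AddMonoidAlgebra.single (s φ m') ((c φ m' : ℂ)) := by rw [hsc, hsc]
        _ = AddMonoidAlgebra.single (s φ m + s φ m') ((c φ m : ℂ) * (c φ m' : ℂ)) :=
            AddMonoidAlgebra.single_mul_single ..
    exact huniq (c φ (m + m')).ne_zero h1
  have hinv : ∀ (φ : AddMonoidAlgebra ℂ (Fin n → ℤ) ≃ₐ[ℂ] AddMonoidAlgebra ℂ (Fin n → ℤ)) m,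
      s φ.symm (s φ m) = m := by
    intro φ m
    have h1 : (AddMonoidAlgebra.single (s φ.symm (s φ m))
        ((c φ m : ℂ) * (c φ.symm (s φ m) : ℂ)) : AddMonoidAlgebra ℂ (Fin n → ℤ)) =
        AddMonoidAlgebra.single m 1 := by
      calc (AddMonoidAlgebra.single (s φ.symm (s φ m)) ((c φ m : ℂ) * (c φ.symm (s φ m) : ℂ)) :
            AddMonoidAlgebra ℂ (Fin n → ℤ))
          = (c φ m : ℂ) •
              (AddMonoidAlgebra.single (s φ.symm (s φ m)) ((c φ.symm (s φ m) : ℂ)) :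
                AddMonoidAlgebra ℂ (Fin n → ℤ)) := (AddMonoidAlgebra.smul_single' _ _ _).symm
        _ = (c φ m : ℂ) • φ.symm (AddMonoidAlgebra.single (s φ m) 1) := by rw [hsc]
        _ = φ.symm ((c φ m : ℂ) • AddMonoidAlgebra.single (s φ m) 1) := (map_smul φ.symm _ _).symm
        _ = φ.symm (AddMonoidAlgebra.single (s φ m) ((c φ m : ℂ))) := by
            rw [AddMonoidAlgebra.smul_single', mul_one]
        _ = φ.symm (φ (AddMonoidAlgebra.single m 1)) := by rw [hsc]
        _ = AddMonoidAlgebra.single m 1 := φ.symm_apply_apply _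
    exact (huniq (mul_ne_zero (c φ m).ne_zero (c φ.symm (s φ m)).ne_zero) h1).1
  have hone : ∀ m, s 1 m = m := by
    intro m
    have h1 : (AddMonoidAlgebra.single m (1 : ℂ) : AddMonoidAlgebra ℂ (Fin n → ℤ)) =
        AddMonoidAlgebra.single (s 1 m) ((c 1 m : ℂ)) := by
      exact hsc 1 m
    exact (huniq one_ne_zero h1).1.symm
  have hmul : ∀ (φ ψ : AddMonoidAlgebra ℂ (Fin n → ℤ) ≃ₐ[ℂ] AddMonoidAlgebra ℂ (Fin n → ℤ)) m,
      s (φ * ψ) m = s φ (s ψ m) := by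
    intro φ ψ m
    have h1 : (AddMonoidAlgebra.single (s (φ * ψ) m) ((c (φ * ψ) m : ℂ)) :
        AddMonoidAlgebra ℂ (Fin n → ℤ)) =
        AddMonoidAlgebra.single (s φ (s ψ m)) ((c ψ m : ℂ) * (c φ (s ψ m) : ℂ)) := by
      calc (AddMonoidAlgebra.single (s (φ * ψ) m) ((c (φ * ψ) m : ℂ)) :
            AddMonoidAlgebra ℂ (Fin n → ℤ))
          = (φ * ψ) (AddMonoidAlgebra.single m 1) := (hsc _ _).symm
        _ = φ (ψ (AddMonoidAlgebra.single m 1)) := rfl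
        _ = φ (AddMonoidAlgebra.single (s ψ m) ((c ψ m : ℂ))) := by rw [hsc]
        _ = φ ((c ψ m : ℂ) • AddMonoidAlgebra.single (s ψ m) 1) := by
            rw [AddMonoidAlgebra.smul_single', mul_one]
        _ = (c ψ m : ℂ) • φ (AddMonoidAlgebra.single (s ψ m) 1) := map_smul φ _ _
        _ = (c ψ m : ℂ) •
              (AddMonoidAlgebra.single (s φ (s ψ m)) ((c φ (s ψ m) : ℂ)) :
                AddMonoidAlgebra ℂ (Fin n → ℤ)) := by rw [hsc]
        _ = AddMonoidAlgebra.single (s φ (s ψ m)) ((c ψ m : ℂ) * (c φ (s ψ m) : ℂ)) :=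
            AddMonoidAlgebra.smul_single' _ _ _
    exact (huniq (c (φ * ψ) m).ne_zero h1).1
  let σ : (AddMonoidAlgebra ℂ (Fin n → ℤ) ≃ₐ[ℂ] AddMonoidAlgebra ℂ (Fin n → ℤ)) →
      AddAut (Fin n → ℤ) := fun φ =>
    { toFun := s φ
      invFun := s φ.symm
      left_inv := hinv φ
      right_inv := fun m => by simpa using hinv φ.symm m
      map_add' := fun m m' => (hadd φ m m').1 }
  let χ : (AddMonoidAlgebra ℂ (Fin n → ℤ) ≃ₐ[ℂ] AddMonoidAlgebra ℂ (Fin n → ℤ)) →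
      (Multiplicative (Fin n → ℤ) →* ℂˣ) := fun φ =>
    MonoidHom.mk' (fun m => c φ m.toAdd)
      (fun a b => Units.ext (by rw [Units.val_mul]; exact (hadd φ a.toAdd b.toAdd).2))
  have hsc' : ∀ (φ : AddMonoidAlgebra ℂ (Fin n → ℤ) ≃ₐ[ℂ] AddMonoidAlgebra ℂ (Fin n → ℤ)) m,
      φ (AddMonoidAlgebra.single m 1 : AddMonoidAlgebra ℂ (Fin n → ℤ)) =
      (c φ m : ℂ) • (AddMonoidAlgebra.single (s φ m) 1 : AddMonoidAlgebra ℂ (Fin n → ℤ)) := by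
    intro φ m
    rw [AddMonoidAlgebra.smul_single', mul_one]
    exact hsc φ m
  constructor
  · intro φ
    refine ⟨(σ φ, χ φ), fun m => hsc' φ m, ?_⟩
    rintro ⟨t, χ'⟩ hq
    have hkey : ∀ m, t m = s φ m ∧ χ' (Multiplicative.ofAdd m) = c φ m := by
      intro m
      have h1 : (AddMonoidAlgebra.single (t m) ((χ' (Multiplicative.ofAdd m) : ℂ)) :
          AddMonoidAlgebra ℂ (Fin n → ℤ)) = AddMonoidAlgebra.single (s φ m) ((c φ m : ℂ)) := by
        rw [← hsc φ m, hq m, AddMonoidAlgebra.smul_single', mul_one]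
      have h2 := huniq (χ' (Multiplicative.ofAdd m)).ne_zero h1
      exact ⟨h2.1, Units.ext h2.2⟩
    refine Prod.ext ?_ ?_
    · exact AddEquiv.ext fun m => (hkey m).1
    · exact MonoidHom.ext fun m => (hkey m.toAdd).2
  · refine ⟨{ toFun := fun φ => Multiplicative.ofAdd (σ φ), map_one' := ?_, map_mul' := ?_ }, fun φ m => ⟨c φ m, hsc' φ m⟩⟩
    · show σ 1 = 0
      exact AddEquiv.ext fun m => hone m
    · intro φ ψ
      show σ (φ * ψ) = σ φ + σ ψ
      exact AddEquiv.ext fun m => hmul φ ψ m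
end
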